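/- arXiv:1203.0758 — 4 statements merged into one kernel-verified Lean document; each statement's English description precedes it below -/
import Mathlib

section
/- The ring of S_α-integers of K equals 𝒪[α]: 𝒪_{S_α} = 𝒪[α], where 𝒪[α] is the subring of K generated by 𝒪 and α. -/
/-!
Setup (following Steiner–Thuswaldner, "Rational self-affine tiles"):
`K` is a number field generated over `ℚ` by an expanding algebraic number `α`
whose primitive minimal polynomial is `A ∈ ℤ[X]` (encoded by: `A` irreducible in
`ℤ[X]`, `A(α) = 0`, and every complex root of `A` has absolute value `> 1`).
The representation space is `𝕂_α = 𝕂_∞ × ∏_{𝔭 ∣ 𝔟} K_𝔭`, where `𝕂_∞` is the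
mixed space `ℝ^r × ℂ^s` of `K` and the product runs over the finite places with
`|α|_𝔭 > 1` (the primes dividing the denominator ideal `𝔟` of `α`).
-/

open NumberField MeasureTheory Polynomial IsDedekindDomain Filter Topology Set
open scoped Classical

noncomputable section

variable (K : Type) [Field K] [NumberField K]

/-- The set of finite places dividing the denominator ideal `𝔟` of `α`,
i.e. those with `|α|_𝔭 > 1`. -/
def denomPlaces (α : K) : Set (HeightOneSpectrum (𝓞 K)) :=
  {v | 1 < v.valuation K α}

/-- The archimedean part `𝕂_∞ ≅ ℝ^r × ℂ^s ≅ ℝ^n` of the representation space,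
equipped with its canonical (Lebesgue) volume. -/
abbrev Kinf : Type := NumberField.mixedEmbedding.mixedSpace K

/-- The nonarchimedean part `𝕂_𝔟 = ∏_{𝔭 ∣ 𝔟} K_𝔭` of the representation space. -/
abbrev Kfin (α : K) : Type := Π v : denomPlaces K α, v.1.adicCompletion K

/-- The representation space `𝕂_α = 𝕂_∞ × 𝕂_𝔟`. -/
abbrev KA (α : K) : Type := Kinf K × Kfin K α

/-- The diagonal embedding `Φ_α : K → 𝕂_α`. -/
def PhiA (α : K) (x : K) : KA K α :=
  (mixedEmbedding K x, fun v => algebraMap K (v.1.adicCompletion K) x)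

/-- The diagonal embedding `Φ_𝔟 : K → 𝕂_𝔟`. -/
def PhiB (α : K) (x : K) : Kfin K α :=
  fun v => algebraMap K (v.1.adicCompletion K) x

/-- `ℤ[α]`, the subring of `K` generated by `α`. -/
def Zring (α : K) : Subalgebra ℤ K := Algebra.adjoin ℤ {α}

/-- `ℤ[α⁻¹]`, the subring of `K` generated by `α⁻¹`. -/
def Zinv (α : K) : Subalgebra ℤ K := Algebra.adjoin ℤ {α⁻¹}

/-- `𝒟` is a standard digit set for `α`: a subset of `ℤ[α]` that is a complete
set of representatives of `ℤ[α]/αℤ[α]`. -/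
def IsStandardDigitSet (α : K) (D : Finset K) : Prop :=
  (D : Set K) ⊆ (Zring K α : Set K) ∧
    ∀ x ∈ Zring K α, ∃! d : K, d ∈ D ∧ ∃ y ∈ Zring K α, x - d = α * y

/-- The rational self-affine tile
`𝓕(α,𝒟) = {∑_{k≥1} Φ_α(d_k α^{-k}) : d_k ∈ 𝒟 for all k ≥ 1}`. -/
def Ztile (α : K) (D : Finset K) : Set (KA K α) :=
  {z | ∃ d : ℕ → K, (∀ k, d k ∈ D) ∧
    Tendsto (fun N => ∑ k ∈ Finset.range N, PhiA K α (d k * α⁻¹ ^ (k + 1)))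
      atTop (𝓝 z)}

/-- `𝔷 = ℤ⟨α,𝒟⟩`, the smallest `ℤ`-submodule of `K` containing `𝒟 - 𝒟` and
closed under multiplication by `α`. -/
def zmoduleAD (α : K) (D : Finset K) : Submodule ℤ K :=
  sInf {M : Submodule ℤ K |
    (∀ d ∈ D, ∀ d' ∈ D, (d : K) - d' ∈ M) ∧ ∀ x ∈ M, α * x ∈ M}

/-- `Λ_{α,m} = ℤ[α] ∩ α^{m-1} ℤ[α⁻¹]` as a set. -/
def LambdaSet (α : K) (m : ℤ) : Set K :=
  {x | x ∈ Zring K α ∧ ∃ y ∈ Zinv K α, x = α ^ (m - 1) * y}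

/-- The intersective tile `𝒢(x)`, regarded as a subset of `𝕂_∞`:
`𝒢(x) = {z ∈ 𝕂_∞ | (z,0) ∈ 𝓕 + Φ_α(x)}`. -/
def Gtile (α : K) (D : Finset K) (x : K) : Set (Kinf K) :=
  {z | ((z, 0) : KA K α) - PhiA K α x ∈ Ztile K α D}
open scoped Multiplicative nonZeroDivisors WithZero

open IsDedekindDomain.HeightOneSpectrum in
lemma auxST_dvd_of_intVal {R : Type*} [CommRing R] [IsDedekindDomain R] {a b : R} (hb : b ≠ 0)
    (h : ∀ v : HeightOneSpectrum R, v.intValuationDef a ≤ v.intValuationDef b) : b ∣ a := by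
  rcases eq_or_ne a 0 with rfl | ha
  · exact dvd_zero b
  rw [← Ideal.span_singleton_le_span_singleton, ← Ideal.dvd_iff_le]
  have hsa : Ideal.span {a} ≠ (⊥ : Ideal R) := by
    simpa [Ideal.span_singleton_eq_bot] using ha
  have hsb : Ideal.span {b} ≠ (⊥ : Ideal R) := by
    simpa [Ideal.span_singleton_eq_bot] using hb
  rw [← Associates.mk_dvd_mk]
  have hfle : (Associates.mk (Ideal.span {b})).factors ≤ (Associates.mk (Ideal.span {a})).factors := by
    obtain ⟨sa, hsa'⟩ := Associates.factors_eq_some_iff_ne_zero.mpr (Associates.mk_ne_zero.mpr hsa)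
    obtain ⟨sb, hsb'⟩ := Associates.factors_eq_some_iff_ne_zero.mpr (Associates.mk_ne_zero.mpr hsb)
    rw [hsa', hsb', WithTop.coe_le_coe, Multiset.le_iff_count]
    intro p
    obtain ⟨P, hP⟩ := Associates.mk_surjective p.1
    have hirr : Irreducible P := Associates.irreducible_mk.mp (hP ▸ p.2)
    have hprime : Prime P := UniqueFactorizationMonoid.irreducible_iff_prime.mp hirr
    let v : HeightOneSpectrum R := ⟨P, Ideal.isPrime_of_prime hprime, hprime.ne_zero⟩
    have hv := h v
    rw [intValuationDef_if_neg v ha, intValuationDef_if_neg v hb, WithZero.exp_le_exp,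
      neg_le_neg_iff, Int.ofNat_le] at hv
    have hva : (Associates.mk v.asIdeal).count (Associates.mk (Ideal.span {a})).factors
        = Multiset.count p sa := by
      rw [hsa']
      have : Associates.mk v.asIdeal = p.1 := by rw [← hP]
      rw [this, Associates.count_some p.2]
    have hvb : (Associates.mk v.asIdeal).count (Associates.mk (Ideal.span {b})).factors
        = Multiset.count p sb := by
      rw [hsb']
      have : Associates.mk v.asIdeal = p.1 := by rw [← hP]
      rw [this, Associates.count_some p.2]
    rw [hva, hvb] at hv
    exact hv
  exact Associates.factors_le.mp hfle

open IsDedekindDomain.HeightOneSpectrum in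
lemma auxST_exists_int {x : K}
    (h : ∀ v : HeightOneSpectrum (𝓞 K), v.valuation K x ≤ 1) :
    ∃ y : 𝓞 K, algebraMap (𝓞 K) K y = x := by
  obtain ⟨a, b, hbnz, hxeq⟩ := IsFractionRing.div_surjective (A := 𝓞 K) x
  have hb0 : b ≠ 0 := nonZeroDivisors.ne_zero hbnz
  have hbK : algebraMap (𝓞 K) K b ≠ 0 := by
    simpa using (IsFractionRing.to_map_ne_zero_of_mem_nonZeroDivisors (K := K) hbnz)
  have key : ∀ v : HeightOneSpectrum (𝓞 K), v.intValuationDef a ≤ v.intValuationDef b := by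
    intro v
    have hv := h v
    rw [← hxeq, map_div₀] at hv
    rw [valuation_of_algebraMap, valuation_of_algebraMap, intValuation_apply, intValuation_apply] at hv
    have hbv : v.intValuationDef b ≠ 0 := v.intValuation_ne_zero b hb0
    rwa [div_le_one₀ (zero_lt_iff.mpr hbv)] at hv
  obtain ⟨c, rfl⟩ := auxST_dvd_of_intVal hb0 key
  refine ⟨c, ?_⟩
  rw [← hxeq, map_mul, mul_div_cancel_left₀ _ hbK]

lemma auxST_exists_pow_le {q c : ℤᵐ⁰} (hq : q < 1) (hc : c ≠ 0) : ∃ k : ℕ, q ^ k ≤ c := by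
  rcases eq_or_ne q 0 with rfl | hq0
  · exact ⟨1, by simpa using zero_le'⟩
  obtain ⟨u, rfl⟩ := WithZero.ne_zero_iff_exists.mp hq0
  obtain ⟨w, rfl⟩ := WithZero.ne_zero_iff_exists.mp hc
  rw [← WithZero.coe_one, WithZero.coe_lt_coe] at hq
  refine ⟨(Multiplicative.toAdd w).natAbs, ?_⟩
  rw [← WithZero.coe_pow, WithZero.coe_le_coe, ← Multiplicative.toAdd_le, toAdd_pow]
  have hu : Multiplicative.toAdd u ≤ -1 := by
    have : Multiplicative.toAdd u < 0 := by
      rwa [← Multiplicative.toAdd_lt, toAdd_one] at hq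
    omega
  set n : ℕ := (Multiplicative.toAdd w).natAbs with hn
  have h1 : (n : ℤ) • Multiplicative.toAdd u ≤ (n : ℤ) * (-1) := by
    rw [smul_eq_mul]
    exact mul_le_mul_of_nonneg_left hu (by positivity)
  calc (n : ℕ) • Multiplicative.toAdd u = (n : ℤ) • Multiplicative.toAdd u := by
        rw [natCast_zsmul]
    _ ≤ (n : ℤ) * (-1) := h1
    _ = -(n : ℤ) := by ring
    _ ≤ Multiplicative.toAdd w := by
        rw [hn]; omega

lemma auxST_partition (α : K) (hα : α ≠ 0) :
    ∃ b' b : 𝓞 K, algebraMap (𝓞 K) K b' * α + algebraMap (𝓞 K) K b = 1 ∧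
      (∃ c : 𝓞 K, algebraMap (𝓞 K) K b' * α = algebraMap (𝓞 K) K c) ∧
      (∃ c : 𝓞 K, algebraMap (𝓞 K) K b * α = algebraMap (𝓞 K) K c) := by
  let B : Ideal (𝓞 K) :=
    { carrier := {b | ∃ c : 𝓞 K, algebraMap (𝓞 K) K b * α = algebraMap (𝓞 K) K c}
      add_mem' := by
        rintro b₁ b₂ ⟨c₁, hc₁⟩ ⟨c₂, hc₂⟩
        exact ⟨c₁ + c₂, by rw [map_add, map_add, add_mul, hc₁, hc₂]⟩
      zero_mem' := ⟨0, by simp⟩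
      smul_mem' := by
        rintro r b ⟨c, hc⟩
        refine ⟨r * c, ?_⟩
        rw [smul_eq_mul, map_mul, map_mul, mul_assoc, hc] }
  have hBmem : ∀ b : 𝓞 K, b ∈ B ↔
      ∃ c : 𝓞 K, algebraMap (𝓞 K) K b * α = algebraMap (𝓞 K) K c := fun _ => Iff.rfl
  let Aid : Ideal (𝓞 K) :=
    { carrier := {a | ∃ b ∈ B, algebraMap (𝓞 K) K a = α * algebraMap (𝓞 K) K b}
      add_mem' := by
        rintro a₁ a₂ ⟨b₁, hb₁, h₁⟩ ⟨b₂, hb₂, h₂⟩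
        exact ⟨b₁ + b₂, add_mem hb₁ hb₂, by rw [map_add, map_add, mul_add, h₁, h₂]⟩
      zero_mem' := ⟨0, zero_mem _, by simp⟩
      smul_mem' := by
        rintro r a ⟨b, hb, hab⟩
        refine ⟨r * b, Ideal.mul_mem_left _ _ hb, ?_⟩
        rw [smul_eq_mul, map_mul, map_mul, hab]; ring }
  have hBne : B ≠ ⊥ := by
    obtain ⟨⟨d, hd⟩, c, hc⟩ := IsLocalization.exists_integer_multiple (𝓞 K)⁰ α
    have hd0 : d ≠ 0 := nonZeroDivisors.ne_zero hd
    refine Submodule.ne_bot_iff _ |>.mpr ⟨d, ⟨c, ?_⟩, hd0⟩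
    rw [hc]; simp [Algebra.smul_def]
  have htop : Aid ⊔ B = ⊤ := by
    by_contra h
    obtain ⟨m, hm, hle⟩ := Ideal.exists_le_maximal _ h
    have hBm : B ≤ m := le_sup_right.trans hle
    have hAm : Aid ≤ m := le_sup_left.trans hle
    have hm0 : m ≠ ⊥ := by
      rintro rfl
      exact hBne (le_bot_iff.mp hBm)
    have hP0 : (m : FractionalIdeal (𝓞 K)⁰ K) ≠ 0 := by
      rwa [Ne, FractionalIdeal.coeIdeal_eq_zero]
    have hB0 : (B : FractionalIdeal (𝓞 K)⁰ K) ≠ 0 := by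
      rwa [Ne, FractionalIdeal.coeIdeal_eq_zero]
    have hBP : (B : FractionalIdeal (𝓞 K)⁰ K) ≤ (m : FractionalIdeal (𝓞 K)⁰ K) :=
      (FractionalIdeal.coeIdeal_le_coeIdeal K).mpr hBm
    have hsαB : FractionalIdeal.spanSingleton (𝓞 K)⁰ α * (B : FractionalIdeal (𝓞 K)⁰ K)
        ≤ (m : FractionalIdeal (𝓞 K)⁰ K) := by
      rw [FractionalIdeal.mul_le]
      intro i hi j hj
      obtain ⟨z, rfl⟩ := (FractionalIdeal.mem_spanSingleton _).mp hi
      obtain ⟨b, hbB, rfl⟩ := (FractionalIdeal.mem_coeIdeal _).mp hj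
      have hbB2 := hbB
      obtain ⟨c, hc⟩ := hbB2
      have hcA : c ∈ Aid := ⟨b, hbB, by rw [← hc]; ring⟩
      have heq : z • α * algebraMap (𝓞 K) K b = algebraMap (𝓞 K) K (z * c) := by
        rw [Algebra.smul_def, map_mul, mul_assoc, mul_comm α, hc]
      rw [heq]
      exact (FractionalIdeal.mem_coeIdeal _).mpr
        ⟨z * c, Ideal.mul_mem_left _ _ (hAm hcA), rfl⟩
    have hPPinv : ((m : FractionalIdeal (𝓞 K)⁰ K))⁻¹ * m = 1 := by
      rw [mul_comm]; exact mul_inv_cancel₀ hP0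
    have hkey : ((m : FractionalIdeal (𝓞 K)⁰ K))⁻¹ * B ≤ (B : FractionalIdeal (𝓞 K)⁰ K) := by
      intro y hy
      have hy1 : y ∈ (1 : FractionalIdeal (𝓞 K)⁰ K) := by
        have h1 : ((m : FractionalIdeal (𝓞 K)⁰ K))⁻¹ * B ≤
            ((m : FractionalIdeal (𝓞 K)⁰ K))⁻¹ * m :=
          mul_le_mul_right hBP _
        rw [hPPinv] at h1
        exact h1 hy
      obtain ⟨c, hc⟩ := (FractionalIdeal.mem_one_iff _).mp hy1
      have hαy : α * y ∈ (1 : FractionalIdeal (𝓞 K)⁰ K) := by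
        have h1 : α * y ∈ FractionalIdeal.spanSingleton (𝓞 K)⁰ α *
            (((m : FractionalIdeal (𝓞 K)⁰ K))⁻¹ * B) :=
          FractionalIdeal.mul_mem_mul (FractionalIdeal.mem_spanSingleton_self _ _) hy
        have h2 : FractionalIdeal.spanSingleton (𝓞 K)⁰ α *
            (((m : FractionalIdeal (𝓞 K)⁰ K))⁻¹ * B) =
            ((m : FractionalIdeal (𝓞 K)⁰ K))⁻¹ *
              (FractionalIdeal.spanSingleton (𝓞 K)⁰ α * B) := by ring
        rw [h2] at h1
        have h3 : ((m : FractionalIdeal (𝓞 K)⁰ K))⁻¹ *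
            (FractionalIdeal.spanSingleton (𝓞 K)⁰ α * B) ≤
            ((m : FractionalIdeal (𝓞 K)⁰ K))⁻¹ * m :=
          mul_le_mul_right hsαB _
        rw [hPPinv] at h3
        exact h3 h1
      obtain ⟨c₂, hc₂⟩ := (FractionalIdeal.mem_one_iff _).mp hαy
      refine (FractionalIdeal.mem_coeIdeal _).mpr ⟨c, ⟨c₂, ?_⟩, hc⟩
      rw [hc, mul_comm y α]
      exact hc₂.symm
    have hinv_le : ((m : FractionalIdeal (𝓞 K)⁰ K))⁻¹ ≤ 1 := by
      have hBB : (B : FractionalIdeal (𝓞 K)⁰ K) * (B : FractionalIdeal (𝓞 K)⁰ K)⁻¹ = 1 :=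
        mul_inv_cancel₀ hB0
      calc ((m : FractionalIdeal (𝓞 K)⁰ K))⁻¹
          = ((m : FractionalIdeal (𝓞 K)⁰ K))⁻¹ * B * (B : FractionalIdeal (𝓞 K)⁰ K)⁻¹ := by
            rw [mul_assoc, hBB, mul_one]
        _ ≤ (B : FractionalIdeal (𝓞 K)⁰ K) * (B : FractionalIdeal (𝓞 K)⁰ K)⁻¹ :=
            mul_le_mul_left hkey _
        _ = 1 := hBB
    obtain ⟨x, hxP, hx1⟩ := FractionalIdeal.exists_notMem_one_of_ne_bot (K := K) hm0 (Ideal.IsMaximal.ne_top hm)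
    exact hx1 (hinv_le hxP)
  have h1 : (1 : 𝓞 K) ∈ Aid ⊔ B := htop ▸ Submodule.mem_top
  obtain ⟨a, haA, b, hbB, hab⟩ := Submodule.mem_sup.mp h1
  obtain ⟨b', hb'B, hb'⟩ := haA
  refine ⟨b', b, ?_, ⟨a, by rw [hb']; ring⟩, hbB⟩
  rw [mul_comm, ← hb', ← map_add, hab, map_one]

lemma auxST_key (α : K) (b' b : 𝓞 K)
    (hsum : algebraMap (𝓞 K) K b' * α + algebraMap (𝓞 K) K b = 1)
    (hc' : ∀ v : HeightOneSpectrum (𝓞 K), v.valuation K (algebraMap (𝓞 K) K b' * α) ≤ 1)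
    (hcb : ∀ v : HeightOneSpectrum (𝓞 K), v.valuation K (algebraMap (𝓞 K) K b * α) ≤ 1) :
    ∀ (k : ℕ) (x : K), (∀ v : HeightOneSpectrum (𝓞 K), v ∉ denomPlaces K α → v.valuation K x ≤ 1) →
      (∀ v ∈ denomPlaces K α,
        v.valuation K x * (v.valuation K (algebraMap (𝓞 K) K b')) ^ k ≤ 1) →
      x ∈ Algebra.adjoin (𝓞 K) {α} := by
  intro k
  induction k with
  | zero =>
    intro x hoff hon
    have hall : ∀ v : HeightOneSpectrum (𝓞 K), v.valuation K x ≤ 1 := by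
      intro v
      by_cases hv : v ∈ denomPlaces K α
      · simpa using hon v hv
      · exact hoff v hv
    obtain ⟨y, rfl⟩ := auxST_exists_int K hall
    exact Subalgebra.algebraMap_mem _ y
  | succ k ih =>
    intro x hoff hon
    -- facts at v ∈ S
    have hb'v : ∀ v ∈ denomPlaces K α,
        v.valuation K (algebraMap (𝓞 K) K b') * v.valuation K α = 1 := by
      intro v hv
      have hvα : 1 < v.valuation K α := hv
      have hbl : v.valuation K (algebraMap (𝓞 K) K b) < 1 := by
        by_contra hge
        push_neg at hge
        have h1 : v.valuation K α ≤ v.valuation K (algebraMap (𝓞 K) K b) * v.valuation K α :=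
          le_mul_of_one_le_left' hge
        have h2 := hcb v
        rw [map_mul] at h2
        exact absurd (h1.trans h2) (not_le.mpr hvα)
      have hmax : (1 : ℤᵐ⁰) ≤ max (v.valuation K (algebraMap (𝓞 K) K b' * α))
          (v.valuation K (algebraMap (𝓞 K) K b)) := by
        have := Valuation.map_add (v.valuation K) (algebraMap (𝓞 K) K b' * α) (algebraMap (𝓞 K) K b)
        rw [hsum, map_one] at this
        exact this
      have hge : (1 : ℤᵐ⁰) ≤ v.valuation K (algebraMap (𝓞 K) K b' * α) := by
        rcases max_cases (v.valuation K (algebraMap (𝓞 K) K b' * α))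
            (v.valuation K (algebraMap (𝓞 K) K b)) with ⟨hmx, _⟩ | ⟨hmx, _⟩
        · rwa [hmx] at hmax
        · rw [hmx] at hmax; exact absurd hmax (not_le.mpr hbl)
      have := le_antisymm (hc' v) hge
      rwa [map_mul] at this
    have hαadj : α ∈ Algebra.adjoin (𝓞 K) {α} :=
      Algebra.subset_adjoin (Set.mem_singleton α)
    have hdec : x = α * (algebraMap (𝓞 K) K b' * x) + algebraMap (𝓞 K) K b * x := by
      calc x = (algebraMap (𝓞 K) K b' * α + algebraMap (𝓞 K) K b) * x := by rw [hsum, one_mul]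
      _ = _ := by ring
    rw [hdec]
    refine add_mem (mul_mem hαadj (ih _ ?_ ?_)) (ih _ ?_ ?_)
    · -- b' * x off S
      intro v hv
      rw [map_mul]
      exact mul_le_one' (IsDedekindDomain.HeightOneSpectrum.valuation_le_one v b') (hoff v hv)
    · -- b' * x on S
      intro v hv
      rw [map_mul]
      have heq : v.valuation K (algebraMap (𝓞 K) K b') * v.valuation K x
            * (v.valuation K (algebraMap (𝓞 K) K b')) ^ k
          = v.valuation K x * (v.valuation K (algebraMap (𝓞 K) K b')) ^ (k + 1) := by
        rw [pow_succ]
        ac_rfl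
      rw [heq]
      exact hon v hv
    · -- b * x off S
      intro v hv
      rw [map_mul]
      exact mul_le_one' (IsDedekindDomain.HeightOneSpectrum.valuation_le_one v b) (hoff v hv)
    · -- b * x on S
      intro v hv
      rw [map_mul]
      have hαne : v.valuation K α ≠ 0 := by
        have hvα : 1 < v.valuation K α := hv
        exact ne_of_gt (lt_trans zero_lt_one hvα)
      have hble : v.valuation K (algebraMap (𝓞 K) K b) ≤ v.valuation K (algebraMap (𝓞 K) K b') := by
        have h1 : v.valuation K (algebraMap (𝓞 K) K b) * v.valuation K α ≤
            v.valuation K (algebraMap (𝓞 K) K b') * v.valuation K α := by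
          rw [hb'v v hv]
          have := hcb v; rwa [map_mul] at this
        have h2 := mul_le_mul_left h1 (v.valuation K α)⁻¹
        rwa [mul_assoc, mul_assoc, mul_inv_cancel₀ hαne, mul_one, mul_one] at h2
      calc v.valuation K (algebraMap (𝓞 K) K b) * v.valuation K x
            * (v.valuation K (algebraMap (𝓞 K) K b')) ^ k
          ≤ v.valuation K (algebraMap (𝓞 K) K b') * v.valuation K x
            * (v.valuation K (algebraMap (𝓞 K) K b')) ^ k := by
            exact mul_le_mul_left (mul_le_mul_left hble _) _
        _ = v.valuation K x * (v.valuation K (algebraMap (𝓞 K) K b')) ^ (k + 1) := by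
            rw [pow_succ]
            ac_rfl
        _ ≤ 1 := hon v hv

/-- The ring of `S_α`-integers equals `𝒪[α]`. -/
theorem sIntegers_eq_adjoin
    (α : K) (A : Polynomial ℤ)
    (hgen : Algebra.adjoin ℚ {α} = ⊤)
    (hAroot : Polynomial.aeval α A = 0)
    (hAirr : Irreducible A)
    (hAexp : ∀ z : ℂ, Polynomial.aeval z A = 0 → 1 < ‖z‖) :
    {x : K | ∀ v : HeightOneSpectrum (𝓞 K), v ∉ denomPlaces K α → v.valuation K x ≤ 1}
      = (Algebra.adjoin (𝓞 K) {α} : Subalgebra (𝓞 K) K) := by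
  have hα : α ≠ 0 := by
    rintro rfl
    have h0K : (algebraMap ℤ K) (A.coeff 0) = 0 := by
      rw [← Polynomial.eval₂_at_zero]
      exact hAroot
    have h0 : A.coeff 0 = 0 := by
      have h1 : ((A.coeff 0 : ℤ) : K) = 0 := by
        rw [← h0K]; simp [algebraMap_int_eq, eq_intCast]
      exact_mod_cast h1
    have hz : (Polynomial.aeval (0 : ℂ) A) = 0 := by
      rw [Polynomial.aeval_def, Polynomial.eval₂_at_zero, h0, map_zero]
    have := hAexp 0 hz
    rw [norm_zero] at this
    exact absurd this (by norm_num)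
  ext x
  simp only [Set.mem_setOf_eq, SetLike.mem_coe]
  constructor
  · intro hx
    obtain ⟨b', b, hsum, ⟨c', hcc'⟩, ⟨cb, hccb⟩⟩ := auxST_partition K α hα
    have hc' : ∀ v : HeightOneSpectrum (𝓞 K), v.valuation K (algebraMap (𝓞 K) K b' * α) ≤ 1 := by
      intro v; rw [hcc']
      exact IsDedekindDomain.HeightOneSpectrum.valuation_le_one v c'
    have hcb : ∀ v : HeightOneSpectrum (𝓞 K), v.valuation K (algebraMap (𝓞 K) K b * α) ≤ 1 := by
      intro v; rw [hccb]
      exact IsDedekindDomain.HeightOneSpectrum.valuation_le_one v cb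
    -- at places in S, the valuation of b' is exactly (v α)⁻¹, in particular < 1
    have hb'lt : ∀ v ∈ denomPlaces K α, v.valuation K (algebraMap (𝓞 K) K b') < 1 := by
      intro v hv
      have hvα : 1 < v.valuation K α := hv
      have hbl : v.valuation K (algebraMap (𝓞 K) K b) < 1 := by
        by_contra hge
        push_neg at hge
        have h1 : v.valuation K α ≤ v.valuation K (algebraMap (𝓞 K) K b) * v.valuation K α :=
          le_mul_of_one_le_left' hge
        have h2 := hcb v
        rw [map_mul] at h2
        exact absurd (h1.trans h2) (not_le.mpr hvα)
      have hmax : (1 : ℤᵐ⁰) ≤ max (v.valuation K (algebraMap (𝓞 K) K b' * α))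
          (v.valuation K (algebraMap (𝓞 K) K b)) := by
        have := Valuation.map_add (v.valuation K) (algebraMap (𝓞 K) K b' * α) (algebraMap (𝓞 K) K b)
        rw [hsum, map_one] at this
        exact this
      have hge : (1 : ℤᵐ⁰) ≤ v.valuation K (algebraMap (𝓞 K) K b' * α) := by
        rcases max_cases (v.valuation K (algebraMap (𝓞 K) K b' * α))
            (v.valuation K (algebraMap (𝓞 K) K b)) with ⟨hmx, _⟩ | ⟨hmx, _⟩
        · rwa [hmx] at hmax
        · rw [hmx] at hmax; exact absurd hmax (not_le.mpr hbl)
      have heq1 : v.valuation K (algebraMap (𝓞 K) K b') * v.valuation K α = 1 := by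
        have := le_antisymm (hc' v) hge
        rwa [map_mul] at this
      by_contra hge'
      push_neg at hge'
      have h1 : v.valuation K α ≤ v.valuation K (algebraMap (𝓞 K) K b') * v.valuation K α :=
        le_mul_of_one_le_left' hge'
      rw [heq1] at h1
      exact absurd (lt_of_lt_of_le hvα h1) (lt_irrefl 1)
    -- a denominator for x
    obtain ⟨s, t, htnz, hxeq⟩ := IsFractionRing.div_surjective (A := 𝓞 K) x
    have ht0 : t ≠ 0 := nonZeroDivisors.ne_zero htnz
    have htK : algebraMap (𝓞 K) K t ≠ 0 := by
      simpa using (IsFractionRing.to_map_ne_zero_of_mem_nonZeroDivisors (K := K) htnz)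
    have hxt : ∀ v : HeightOneSpectrum (𝓞 K),
        v.valuation K x * v.valuation K (algebraMap (𝓞 K) K t) ≤ 1 := by
      intro v
      have hmul : x * algebraMap (𝓞 K) K t = algebraMap (𝓞 K) K s := by
        rw [← hxeq]
        field_simp
      rw [← map_mul, hmul]
      exact IsDedekindDomain.HeightOneSpectrum.valuation_le_one v s
    have ht_ne : ∀ v : HeightOneSpectrum (𝓞 K), v.valuation K (algebraMap (𝓞 K) K t) ≠ 0 :=
      fun v => (Valuation.ne_zero_iff _).mpr htK
    have hF : {v : HeightOneSpectrum (𝓞 K) | v.valuation K (algebraMap (𝓞 K) K t) < 1}.Finite := by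
      have hspan : Ideal.span {t} ≠ (⊥ : Ideal (𝓞 K)) := by
        simpa [Ideal.span_singleton_eq_bot] using ht0
      refine Set.Finite.subset (Ideal.finite_factors hspan) ?_
      intro v hv
      exact (IsDedekindDomain.HeightOneSpectrum.valuation_lt_one_iff_dvd v t).mp hv
    set kf : HeightOneSpectrum (𝓞 K) → ℕ := fun v =>
      if h : v.valuation K (algebraMap (𝓞 K) K b') < 1 ∧ v.valuation K (algebraMap (𝓞 K) K t) ≠ 0
      then (auxST_exists_pow_le h.1 h.2).choose else 0 with hkf
    set k : ℕ := hF.toFinset.sup kf with hk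
    refine auxST_key K α b' b hsum hc' hcb k x hx ?_
    intro v hv
    by_cases hvF : v.valuation K (algebraMap (𝓞 K) K t) < 1
    · have hvG : v ∈ hF.toFinset := hF.mem_toFinset.mpr hvF
      have hkv : kf v ≤ k := Finset.le_sup hvG
      have hcond : v.valuation K (algebraMap (𝓞 K) K b') < 1 ∧
          v.valuation K (algebraMap (𝓞 K) K t) ≠ 0 := ⟨hb'lt v hv, ht_ne v⟩
      have hchoose : (v.valuation K (algebraMap (𝓞 K) K b')) ^ (kf v)
          ≤ v.valuation K (algebraMap (𝓞 K) K t) := by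
        rw [hkf]
        simp only [dif_pos hcond]
        exact (auxST_exists_pow_le hcond.1 hcond.2).choose_spec
      have hpow : (v.valuation K (algebraMap (𝓞 K) K b')) ^ k
          ≤ (v.valuation K (algebraMap (𝓞 K) K b')) ^ (kf v) := by
        obtain ⟨d, hd⟩ := Nat.exists_eq_add_of_le hkv
        rw [hd, pow_add]
        exact mul_le_of_le_one_right' (pow_le_one' (le_of_lt (hb'lt v hv)) d)
      calc v.valuation K x * (v.valuation K (algebraMap (𝓞 K) K b')) ^ k
          ≤ v.valuation K x * v.valuation K (algebraMap (𝓞 K) K t) :=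
            mul_le_mul_right (hpow.trans hchoose) _
        _ ≤ 1 := hxt v
    · push_neg at hvF
      have htone : v.valuation K (algebraMap (𝓞 K) K t) = 1 :=
        le_antisymm (IsDedekindDomain.HeightOneSpectrum.valuation_le_one v t) hvF
      have hx1 : v.valuation K x ≤ 1 := by
        have := hxt v
        rwa [htone, mul_one] at this
      exact mul_le_one' hx1 (pow_le_one' (le_of_lt (hb'lt v hv)) k)
  · intro hx v hv
    have hα1 : v.valuation K α ≤ 1 := not_lt.mp hv
    induction hx using Algebra.adjoin_induction with
    | mem y hy =>
      rw [Set.mem_singleton_iff] at hy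
      rw [hy]
      exact hα1
    | algebraMap r => exact IsDedekindDomain.HeightOneSpectrum.valuation_le_one v r
    | add y z hy hz hvy hvz =>
      exact le_trans (Valuation.map_add _ _ _) (max_le hvy hvz)
    | mul y z hy hz hvy hvz =>
      rw [map_mul]
      exact mul_le_one' hvy hvz
end
end

section
/- The additive group ℤ[α] is a subgroup of finite index of 𝒪[α], and 𝔷 = ℤ⟨α,𝒟⟩ is an additive subgroup of finite index of ℤ[α]. -/
/-!
Setup (following Steiner–Thuswaldner, "Rational self-affine tiles"):
`K` is a number field generated over `ℚ` by an expanding algebraic number `α`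
whose primitive minimal polynomial is `A ∈ ℤ[X]` (encoded by: `A` irreducible in
`ℤ[X]`, `A(α) = 0`, and every complex root of `A` has absolute value `> 1`).
The representation space is `𝕂_α = 𝕂_∞ × ∏_{𝔭 ∣ 𝔟} K_𝔭`, where `𝕂_∞` is the
mixed space `ℝ^r × ℂ^s` of `K` and the product runs over the finite places with
`|α|_𝔭 > 1` (the primes dividing the denominator ideal `𝔟` of `α`).
-/

open NumberField MeasureTheory Polynomial IsDedekindDomain Filter Topology Set
open scoped Classical

noncomputable section

variable (K : Type) [Field K] [NumberField K]

section Aux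
set_option linter.unusedSectionVars false

variable {K : Type} [Field K] [NumberField K]

lemma mem_zring_iff {α x : K} : x ∈ Zring K α ↔ ∃ g : Polynomial ℤ, Polynomial.aeval α g = x := by
  have h : Zring K α = (Polynomial.aeval α : Polynomial ℤ →ₐ[ℤ] K).range :=
    Algebra.adjoin_singleton_eq_range_aeval ℤ α
  rw [h]
  exact AlgHom.mem_range (φ := Polynomial.aeval α)

lemma intCast_mem_zring (α : K) (n : ℤ) : (n : K) ∈ Zring K α := by
  simpa using Subalgebra.algebraMap_mem (Zring K α) n

lemma alpha_mem_zring (α : K) : α ∈ Zring K α := Algebra.self_mem_adjoin_singleton ℤ α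

/-- Covering of `ℤ[α]` by finitely many cosets of `N·ℤ[α]`. -/
def Cov (α : K) (N : ℤ) : Prop :=
  ∃ F : Finset K, ∀ x ∈ Zring K α, ∃ f ∈ F, ∃ y ∈ Zring K α, x - f = (N : K) * y

variable {α : K} {A : Polynomial ℤ}

lemma A_natDegree_pos (hAroot : Polynomial.aeval α A = 0) (hAirr : Irreducible A) :
    0 < A.natDegree := by
  rcases Nat.eq_zero_or_pos A.natDegree with h0 | h
  · exfalso
    have hC := Polynomial.eq_C_of_natDegree_eq_zero h0
    rw [hC] at hAroot
    rw [Polynomial.aeval_C] at hAroot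
    have : (A.coeff 0 : K) = 0 := by simpa using hAroot
    have : A.coeff 0 = 0 := by exact_mod_cast this
    rw [this, map_zero] at hC
    exact hAirr.ne_zero hC
  · exact h

lemma A_isPrimitive (hAroot : Polynomial.aeval α A = 0) (hAirr : Irreducible A) :
    A.IsPrimitive := by
  intro r hr
  obtain ⟨B, hB⟩ := hr
  rcases hAirr.isUnit_or_isUnit hB with h | h
  · exact Polynomial.isUnit_C.mp h
  · exfalso
    have hd := A_natDegree_pos hAroot hAirr
    have hAne : A ≠ 0 := hAirr.ne_zero
    have hrne : Polynomial.C r ≠ 0 := by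
      rintro hr0
      rw [hr0, zero_mul] at hB
      exact hAne hB
    have hBne : B ≠ 0 := by
      rintro rfl
      rw [mul_zero] at hB
      exact hAne hB
    have : A.natDegree = 0 := by
      rw [hB, Polynomial.natDegree_mul hrne hBne, Polynomial.natDegree_C,
        Polynomial.natDegree_eq_zero_of_isUnit h]
    omega

lemma A_map_zmod_ne_zero (hAroot : Polynomial.aeval α A = 0)
    (hAirr : Irreducible A) {p : ℕ} (hp : p.Prime) :
    A.map (Int.castRingHom (ZMod p)) ≠ 0 := by
  intro h
  have hdvd : ∀ i, (p : ℤ) ∣ A.coeff i := by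
    intro i
    have h2 := congrArg (fun q => Polynomial.coeff q i) h
    simp only [Polynomial.coeff_map, Polynomial.coeff_zero] at h2
    exact (ZMod.intCast_zmod_eq_zero_iff_dvd _ _).mp (by exact_mod_cast h2)
  have hCdvd : Polynomial.C ((p : ℤ)) ∣ A := (Polynomial.C_dvd_iff_dvd_coeff _ _).mpr hdvd
  have hu := A_isPrimitive hAroot hAirr _ hCdvd
  exact (Int.prime_iff_natAbs_prime.mpr (by simpa using hp)).not_unit hu

lemma cov_prime (hAroot : Polynomial.aeval α A = 0) (hAirr : Irreducible A)
    {p : ℕ} (hp : p.Prime) : Cov α (p : ℤ) := by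
  haveI := Fact.mk hp
  set φ := Int.castRingHom (ZMod p) with hφ
  have hAb : A.map φ ≠ 0 := A_map_zmod_ne_zero hAroot hAirr hp
  have hnpos : 0 < A.natDegree := A_natDegree_pos hAroot hAirr
  set n := A.natDegree with hn
  refine ⟨(Finset.univ : Finset (Fin n → ZMod p)).image
    (fun c => Polynomial.aeval α (∑ i : Fin n, Polynomial.C ((c i).val : ℤ) * Polynomial.X ^ (i : ℕ))), ?_⟩
  intro x hx
  obtain ⟨g, rfl⟩ := mem_zring_iff.mp hx
  set B := A.map φ * Polynomial.C (A.map φ).leadingCoeff⁻¹ with hBdef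
  have hB : B.Monic := Polynomial.monic_mul_leadingCoeff_inv hAb
  set rr := g.map φ %ₘ B with hrrdef
  have hkey : rr + B * (g.map φ /ₘ B) = g.map φ := Polynomial.modByMonic_add_div _ B
  obtain ⟨q, hq⟩ := Polynomial.map_surjective φ ZMod.intCast_surjective
      (Polynomial.C (A.map φ).leadingCoeff⁻¹ * (g.map φ /ₘ B))
  have hdeg : rr.natDegree < n := by
    have h1 : rr.degree < B.degree := Polynomial.degree_modByMonic_lt _ hB
    have hBdeg : B.degree = (A.map φ).degree := by
      rw [hBdef, Polynomial.degree_mul, Polynomial.degree_C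
        (inv_ne_zero (Polynomial.leadingCoeff_ne_zero.mpr hAb)), add_zero]
    have h2 : B.degree ≤ A.degree := hBdeg ▸ Polynomial.degree_map_le
    rcases eq_or_ne rr 0 with h | h
    · simpa [h] using hnpos
    · have h3 : rr.degree < A.degree := lt_of_lt_of_le h1 h2
      rw [Polynomial.degree_eq_natDegree hAirr.ne_zero] at h3
      exact (Polynomial.natDegree_lt_iff_degree_lt h).mpr h3
  set L := ∑ i : Fin n, Polynomial.C (((rr.coeff i).val : ℤ)) * Polynomial.X ^ (i : ℕ) with hLdef
  have hLmap : L.map φ = rr := by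
    have : L.map φ = ∑ i : Fin n, Polynomial.C (rr.coeff i) * Polynomial.X ^ (i : ℕ) := by
      rw [hLdef, Polynomial.map_sum]
      refine Finset.sum_congr rfl fun i _ => ?_
      rw [Polynomial.map_mul, Polynomial.map_C, Polynomial.map_pow, Polynomial.map_X]
      congr 1
      simp [hφ, ZMod.natCast_val, ZMod.cast_id]
    rw [this]
    conv_rhs => rw [rr.as_sum_range' n hdeg]
    rw [← Fin.sum_univ_eq_sum_range]
    refine Finset.sum_congr rfl fun i _ => ?_
    rw [Polynomial.C_mul_X_pow_eq_monomial]
  have hmap0 : (g - (A * q + L)).map φ = 0 := by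
    rw [Polynomial.map_sub, Polynomial.map_add, Polynomial.map_mul, hq, hLmap]
    have hBQ : A.map φ * (Polynomial.C (A.map φ).leadingCoeff⁻¹ * (g.map φ /ₘ B))
        = B * (g.map φ /ₘ B) := by rw [hBdef]; ring
    linear_combination -hkey - hBQ
  have hdvd : ∀ i, ((p : ℕ) : ℤ) ∣ (g - (A * q + L)).coeff i := by
    intro i
    have h2 := congrArg (fun q => Polynomial.coeff q i) hmap0
    simp only [Polynomial.coeff_map, Polynomial.coeff_zero] at h2
    exact (ZMod.intCast_zmod_eq_zero_iff_dvd _ p).mp (by exact_mod_cast h2)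
  obtain ⟨h', hh'⟩ := (Polynomial.C_dvd_iff_dvd_coeff ((p : ℕ) : ℤ) _).mpr hdvd
  refine ⟨Polynomial.aeval α L, Finset.mem_image.mpr ⟨fun i => rr.coeff i, Finset.mem_univ _, rfl⟩,
    Polynomial.aeval α h', mem_zring_iff.mpr ⟨h', rfl⟩, ?_⟩
  have hg : g = A * q + L + Polynomial.C ((p : ℤ)) * h' := by
    have := sub_eq_iff_eq_add.mp hh'
    push_cast at this ⊢
    linear_combination this
  rw [hg]
  simp only [map_add, map_mul, hAroot, Polynomial.aeval_C, zero_mul]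
  push_cast
  ring

lemma cov_neg {N : ℤ} (h : Cov α N) : Cov α (-N) := by
  obtain ⟨F, hF⟩ := h
  refine ⟨F, fun x hx => ?_⟩
  obtain ⟨f, hf, y, hy, hxy⟩ := hF x hx
  exact ⟨f, hf, -y, neg_mem hy, by push_cast; rw [hxy]; ring⟩

lemma cov_mul {M P : ℤ} (hM : Cov α M) (hP : Cov α P) : Cov α (P * M) := by
  obtain ⟨FM, hFM⟩ := hM
  obtain ⟨FP, hFP⟩ := hP
  refine ⟨(FP ×ˢ FM).image (fun z => z.1 + (P : K) * z.2), fun x hx => ?_⟩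
  obtain ⟨f₂, hf₂, s, hs, hxs⟩ := hFP x hx
  obtain ⟨f₁, hf₁, t, ht, hst⟩ := hFM s hs
  refine ⟨f₂ + (P : K) * f₁, Finset.mem_image.mpr ⟨(f₂, f₁), Finset.mem_product.mpr ⟨hf₂, hf₁⟩, rfl⟩,
    t, ht, ?_⟩
  have : x - (f₂ + (P : K) * f₁) = (x - f₂) - (P : K) * f₁ := by ring
  rw [this, hxs, ← mul_sub, hst]
  push_cast
  ring

lemma cov_all (hAroot : Polynomial.aeval α A = 0) (hAirr : Irreducible A) :
    ∀ N : ℤ, N ≠ 0 → Cov α N := by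
  have H : ∀ n : ℕ, ∀ N : ℤ, N ≠ 0 → N.natAbs = n → Cov α N := by
    intro n
    induction n using Nat.strong_induction_on with
    | _ n IH =>
      intro N hN hn
      by_cases h1 : N.natAbs = 1
      · rcases Int.natAbs_eq_iff.mp h1 with h | h <;> rw [h]
        · exact ⟨{0}, fun x hx => ⟨0, Finset.mem_singleton_self 0, x, hx, by push_cast; ring⟩⟩
        · exact ⟨{0}, fun x hx => ⟨0, Finset.mem_singleton_self 0, -x, neg_mem hx, by push_cast; ring⟩⟩
      · obtain ⟨q, hq_prime, M, hqM⟩ := Int.exists_prime_and_dvd h1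
        have hqnat : q.natAbs.Prime := Int.prime_iff_natAbs_prime.mp hq_prime
        have hM : M ≠ 0 := by rintro rfl; rw [mul_zero] at hqM; exact hN hqM
        have hlt : M.natAbs < n := by
          rw [← hn, hqM, Int.natAbs_mul]
          have h2 : 2 ≤ q.natAbs := hqnat.two_le
          have hMpos : 0 < M.natAbs := Int.natAbs_pos.mpr hM
          nlinarith
        have hcovM : Cov α M := IH M.natAbs hlt M hM rfl
        have hcovq : Cov α q := by
          have hbase : Cov α ((q.natAbs : ℕ) : ℤ) := cov_prime hAroot hAirr hqnat
          rcases Int.natAbs_eq q with h | h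
          · rwa [← h] at hbase
          · rw [h, ← neg_neg ((q.natAbs : ℤ))]
            exact cov_neg (by simpa using hbase)
        rw [hqM]
        exact cov_mul hcovM hcovq
  intro N hN
  exact H N.natAbs N hN rfl

lemma exists_int_mul_mem (hgen : Algebra.adjoin ℚ {α} = ⊤) (x : K) :
    ∃ m : ℤ, m ≠ 0 ∧ (m : K) * x ∈ Zring K α := by
  have hx : x ∈ Algebra.adjoin ℚ {α} := by rw [hgen]; trivial
  induction hx using Algebra.adjoin_induction with
  | mem z hz =>
    refine ⟨1, one_ne_zero, ?_⟩
    rw [Set.mem_singleton_iff] at hz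
    rw [hz]
    simpa using alpha_mem_zring α
  | algebraMap r =>
    refine ⟨(r.den : ℤ), by exact_mod_cast r.den_ne_zero, ?_⟩
    have h : ((r.den : ℤ) : K) * algebraMap ℚ K r = ((r.num : ℤ) : K) := by
      rw [eq_ratCast]
      push_cast
      rw [mul_comm]
      exact_mod_cast congrArg (fun t : ℚ => (t : K)) (Rat.mul_den_eq_num r)
    rw [h]
    exact intCast_mem_zring α r.num
  | add u v hu hv ihu ihv =>
    obtain ⟨m₁, hm₁, h₁⟩ := ihu
    obtain ⟨m₂, hm₂, h₂⟩ := ihv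
    refine ⟨m₁ * m₂, mul_ne_zero hm₁ hm₂, ?_⟩
    have : ((m₁ * m₂ : ℤ) : K) * (u + v) = (m₂ : K) * ((m₁ : K) * u) + (m₁ : K) * ((m₂ : K) * v) := by
      push_cast; ring
    rw [this]
    exact add_mem (mul_mem (intCast_mem_zring α m₂) h₁) (mul_mem (intCast_mem_zring α m₁) h₂)
  | mul u v hu hv ihu ihv =>
    obtain ⟨m₁, hm₁, h₁⟩ := ihu
    obtain ⟨m₂, hm₂, h₂⟩ := ihv
    refine ⟨m₁ * m₂, mul_ne_zero hm₁ hm₂, ?_⟩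
    have : ((m₁ * m₂ : ℤ) : K) * (u * v) = ((m₁ : K) * u) * ((m₂ : K) * v) := by
      push_cast; ring
    rw [this]
    exact mul_mem h₁ h₂

end Aux

section Aux2
set_option linter.unusedSectionVars false
set_option maxHeartbeats 1000000

variable {K : Type} [Field K] [NumberField K] {α : K} {A : Polynomial ℤ}

lemma relindex_ne_zero_of_cov {H T : AddSubgroup K} (hle : H ≤ T) (F : Finset K)
    (hcov : ∀ x ∈ T, ∃ f ∈ F, x - f ∈ H) : H.relIndex T ≠ 0 := by
  have hfin : Finite (T ⧸ H.addSubgroupOf T) := by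
    have hsurj : Function.Surjective (fun f : F =>
        if h : (f : K) ∈ T then (QuotientAddGroup.mk ⟨(f : K), h⟩ : T ⧸ H.addSubgroupOf T)
        else 0) := by
      intro x
      refine QuotientAddGroup.induction_on x ?_
      intro t
      obtain ⟨f, hfF, hfh⟩ := hcov (t : K) t.2
      have hfT : f ∈ T := by
        have h1 : (t : K) - f ∈ T := hle hfh
        have h2 : f = (t : K) - ((t : K) - f) := by ring
        rw [h2]
        exact T.sub_mem t.2 h1
      refine ⟨⟨f, hfF⟩, ?_⟩
      simp only [hfT, dif_pos]
      refine (QuotientAddGroup.eq).mpr ?_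
      rw [AddSubgroup.mem_addSubgroupOf]
      have h3 : ((-(⟨f, hfT⟩ : T) + t : T) : K) = (t : K) - f := by
        push_cast
        ring
      rw [h3]
      exact hfh
    exact Finite.of_surjective _ hsurj
  exact AddSubgroup.index_ne_zero_of_finite

lemma cov_O (hgen : Algebra.adjoin ℚ {α} = ⊤) (hAroot : Polynomial.aeval α A = 0)
    (hAirr : Irreducible A) :
    ∃ F : Finset K, ∀ x ∈ Algebra.adjoin (𝓞 K) {α}, ∃ f ∈ F, x - f ∈ Zring K α := by
  obtain ⟨S₀, hS₀⟩ := Module.Finite.fg_top (R := ℤ) (M := 𝓞 K)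
  set w : {i // i ∈ S₀} → K := fun i => algebraMap (𝓞 K) K i.1 with hw
  have hOdec : ∀ ω : 𝓞 K, ∃ c : {i // i ∈ S₀} → ℤ,
      algebraMap (𝓞 K) K ω = ∑ i, (c i : K) * w i := by
    intro ω
    have hmem : ω ∈ Submodule.span ℤ (↑S₀ : Set (𝓞 K)) := by rw [hS₀]; trivial
    obtain ⟨f, -, hf⟩ := Submodule.mem_span_finset.mp hmem
    refine ⟨fun i => f i.1, ?_⟩
    calc algebraMap (𝓞 K) K ω = ∑ i ∈ S₀, ((f i : ℤ) : K) * algebraMap (𝓞 K) K i := by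
          rw [← hf, map_sum]
          refine Finset.sum_congr rfl fun i _ => ?_
          rw [map_zsmul, zsmul_eq_mul]
      _ = ∑ i, (f i.1 : K) * w i := (Finset.sum_attach S₀ _).symm
  have hdec : ∀ x ∈ Algebra.adjoin (𝓞 K) {α}, ∃ r : {i // i ∈ S₀} → K,
      (∀ i, r i ∈ Zring K α) ∧ x = ∑ i, r i * w i := by
    intro x hx
    induction hx using Algebra.adjoin_induction with
    | mem z hz =>
      rw [Set.mem_singleton_iff] at hz
      obtain ⟨c, hc⟩ := hOdec 1
      refine ⟨fun i => z * (c i : K), fun i => ?_, ?_⟩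
      · rw [hz]
        exact mul_mem (alpha_mem_zring α) (intCast_mem_zring α _)
      · rw [map_one] at hc
        calc z = z * 1 := (mul_one z).symm
          _ = z * ∑ i, (c i : K) * w i := by rw [← hc]
          _ = ∑ i, z * (c i : K) * w i := by
              rw [Finset.mul_sum]
              exact Finset.sum_congr rfl fun i _ => by ring
    | algebraMap ω =>
      obtain ⟨c, hc⟩ := hOdec ω
      exact ⟨fun i => (c i : K), fun i => intCast_mem_zring α _, hc⟩
    | add u v hu hv ihu ihv =>
      obtain ⟨r, hr, hru⟩ := ihu
      obtain ⟨s, hs, hsv⟩ := ihv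
      refine ⟨fun i => r i + s i, fun i => add_mem (hr i) (hs i), ?_⟩
      rw [hru, hsv, ← Finset.sum_add_distrib]
      exact Finset.sum_congr rfl fun i _ => by ring
    | mul u v hu hv ihu ihv =>
      obtain ⟨r, hr, hru⟩ := ihu
      obtain ⟨s, hs, hsv⟩ := ihv
      have hprod : ∀ i j : {i // i ∈ S₀}, ∃ c : {i // i ∈ S₀} → ℤ,
          w i * w j = ∑ k, (c k : K) * w k := by
        intro i j
        obtain ⟨c, hc⟩ := hOdec (i.1 * j.1)
        exact ⟨c, by rw [← hc, map_mul]⟩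
      choose t ht using hprod
      refine ⟨fun k => ∑ i, ∑ j, r i * s j * (t i j k : K),
        fun k => sum_mem fun i _ => sum_mem fun j _ =>
          mul_mem (mul_mem (hr i) (hs j)) (intCast_mem_zring α _), ?_⟩
      rw [hru, hsv, Finset.sum_mul_sum]
      calc ∑ i, ∑ j, (r i * w i) * (s j * w j)
          = ∑ i, ∑ j, ∑ k, (r i * s j * (t i j k : K)) * w k := by
            refine Finset.sum_congr rfl fun i _ => Finset.sum_congr rfl fun j _ => ?_
            rw [show (r i * w i) * (s j * w j) = (r i * s j) * (w i * w j) by ring,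
              ht i j, Finset.mul_sum]
            exact Finset.sum_congr rfl fun k _ => by ring
        _ = ∑ i, ∑ k, ∑ j, (r i * s j * (t i j k : K)) * w k :=
            Finset.sum_congr rfl fun i _ => Finset.sum_comm
        _ = ∑ k, ∑ i, ∑ j, (r i * s j * (t i j k : K)) * w k := Finset.sum_comm
        _ = ∑ k, (∑ i, ∑ j, r i * s j * (t i j k : K)) * w k := by
            refine Finset.sum_congr rfl fun k _ => ?_
            rw [Finset.sum_mul]
            exact Finset.sum_congr rfl fun i _ => by rw [Finset.sum_mul]
  choose m hm hmem using fun i : {i // i ∈ S₀} => exists_int_mul_mem hgen (w i)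
  set d : ℤ := ∏ i, m i with hd
  have hd0 : d ≠ 0 := Finset.prod_ne_zero_iff.mpr fun i _ => hm i
  have hdw : ∀ i, (d : K) * w i ∈ Zring K α := by
    intro i
    have hsplit : d = m i * ∏ j ∈ Finset.univ.erase i, m j :=
      (Finset.mul_prod_erase _ _ (Finset.mem_univ i)).symm
    have h1 : (d : K) * w i
        = ((∏ j ∈ Finset.univ.erase i, m j : ℤ) : K) * ((m i : K) * w i) := by
      rw [hsplit]
      push_cast
      ring
    rw [h1]
    exact mul_mem (intCast_mem_zring α _) (hmem i)
  obtain ⟨Fd, hFd⟩ := cov_all hAroot hAirr d hd0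
  refine ⟨(Finset.univ : Finset ({i // i ∈ S₀} → {f // f ∈ Fd})).image
      (fun c => ∑ i, ((c i : K)) * w i), ?_⟩
  intro x hx
  obtain ⟨r, hrR, hrx⟩ := hdec x hx
  have hch : ∀ i, ∃ f, f ∈ Fd ∧ ∃ y, y ∈ Zring K α ∧ r i - f = (d : K) * y := by
    intro i
    obtain ⟨f, hf, y, hy, hxy⟩ := hFd (r i) (hrR i)
    exact ⟨f, hf, y, hy, hxy⟩
  choose f hfF y hyR hxy using hch
  refine ⟨∑ i, f i * w i,
    Finset.mem_image.mpr ⟨fun i => ⟨f i, hfF i⟩, Finset.mem_univ _, rfl⟩, ?_⟩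
  rw [hrx, ← Finset.sum_sub_distrib]
  refine sum_mem fun i _ => ?_
  rw [show r i * w i - f i * w i = (r i - f i) * w i by ring, hxy i,
    show ((d : K) * y i) * w i = y i * ((d : K) * w i) by ring]
  exact mul_mem (hyR i) (hdw i)

lemma zmod_le_zring (D : Finset K) (hD : IsStandardDigitSet K α D) :
    ∀ x ∈ zmoduleAD K α D, x ∈ Zring K α := by
  intro x hx
  have hle : zmoduleAD K α D ≤ Subalgebra.toSubmodule (Zring K α) := by
    apply sInf_le
    constructor
    · intro d hd d' hd'
      rw [Subalgebra.mem_toSubmodule]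
      exact sub_mem (hD.1 hd) (hD.1 hd')
    · intro z hz
      rw [Subalgebra.mem_toSubmodule] at hz ⊢
      exact mul_mem (alpha_mem_zring α) hz
  exact (Subalgebra.mem_toSubmodule _).mp (hle hx)

lemma zmod_mul_mem (D : Finset K) {r : K} (hr : r ∈ Zring K α) :
    ∀ z ∈ zmoduleAD K α D, r * z ∈ zmoduleAD K α D := by
  induction hr using Algebra.adjoin_induction with
  | mem u hu =>
    rw [Set.mem_singleton_iff] at hu
    intro z hz
    rw [hu]
    exact Submodule.mem_sInf.mpr fun M hM => hM.2 z (Submodule.mem_sInf.mp hz M hM)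
  | algebraMap n =>
    intro z hz
    have h1 : (algebraMap ℤ K n) * z = n • z := by
      rw [zsmul_eq_mul, eq_intCast]
    rw [h1]
    exact Submodule.smul_mem _ n hz
  | add u v hu hv ihu ihv =>
    intro z hz
    rw [add_mul]
    exact add_mem (ihu z hz) (ihv z hz)
  | mul u v hu hv ihu ihv =>
    intro z hz
    rw [mul_assoc]
    exact ihu _ (ihv z hz)

lemma one_le_mult_prod : ∀ s : Multiset ℝ, (∀ x ∈ s, 1 < x) → 1 ≤ s.prod := by
  intro s
  induction s using Multiset.induction_on with
  | empty => simp
  | cons a t ih =>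
    intro h
    rw [Multiset.prod_cons]
    have h1 := h a (Multiset.mem_cons_self a t)
    have h2 := ih fun x hx => h x (Multiset.mem_cons_of_mem hx)
    nlinarith

lemma one_lt_mult_prod {s : Multiset ℝ} (h : ∀ x ∈ s, 1 < x) (hs : s ≠ 0) : 1 < s.prod := by
  obtain ⟨a, ha⟩ := Multiset.exists_mem_of_ne_zero hs
  obtain ⟨t, rfl⟩ := Multiset.exists_cons_of_mem ha
  rw [Multiset.prod_cons]
  have h1 : 1 < a := h a (Multiset.mem_cons_self _ _)
  have h2 : 1 ≤ t.prod := one_le_mult_prod t fun x hx => h x (Multiset.mem_cons_of_mem hx)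
  nlinarith

lemma coeff_zero_natAbs_lt (hAroot : Polynomial.aeval α A = 0) (hAirr : Irreducible A)
    (hAexp : ∀ z : ℂ, Polynomial.aeval z A = 0 → 1 < ‖z‖) :
    1 < (A.coeff 0).natAbs := by
  have hdeg := A_natDegree_pos hAroot hAirr
  have hAne : A ≠ 0 := hAirr.ne_zero
  have hinj : Function.Injective (algebraMap ℤ ℂ) := fun a b h => by
    simpa using h
  set Ac := A.map (algebraMap ℤ ℂ) with hAc
  have hAcne : Ac ≠ 0 := by
    rw [hAc, Ne, Polynomial.map_eq_zero_iff hinj]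
    exact hAne
  have hsplit : Ac.Splits := IsAlgClosed.splits Ac
  have hfact := hsplit.eq_prod_roots
  have heval : (A.coeff 0 : ℂ) = Ac.leadingCoeff * (Ac.roots.map fun a => -a).prod := by
    have h0 : Ac.coeff 0 = (A.coeff 0 : ℂ) := by
      rw [hAc, Polynomial.coeff_map]
      simp
    calc (A.coeff 0 : ℂ) = Ac.eval 0 := by rw [← h0, Polynomial.coeff_zero_eq_eval_zero]
      _ = Ac.leadingCoeff * (Ac.roots.map fun a => -a).prod := by
          conv_lhs => rw [hfact]
          rw [Polynomial.eval_mul, Polynomial.eval_C, Polynomial.eval_multiset_prod,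
            Multiset.map_map]
          refine congrArg (fun t => Ac.leadingCoeff * t)
            (congrArg Multiset.prod (Multiset.map_congr rfl fun a _ => ?_))
          simp
  have habs : |(A.coeff 0 : ℝ)| = ‖Ac.leadingCoeff‖ * (Ac.roots.map (fun z : ℂ => ‖z‖)).prod := by
    have h1 := congrArg (fun z : ℂ => ‖z‖) heval
    simp only [Complex.norm_intCast, norm_mul] at h1
    rw [h1, show ‖(Ac.roots.map fun a => -a).prod‖ = ((Ac.roots.map fun a => -a).map (fun z : ℂ => ‖z‖)).prod from map_multiset_prod (normHom : ℂ →*₀ ℝ) _, Multiset.map_map]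
    refine congrArg (fun t => ‖Ac.leadingCoeff‖ * t)
      (congrArg Multiset.prod (Multiset.map_congr rfl fun a _ => ?_))
    simp
  have hlc : 1 ≤ ‖Ac.leadingCoeff‖ := by
    have hlcmap : Ac.leadingCoeff = (A.leadingCoeff : ℂ) := by
      rw [hAc, Polynomial.leadingCoeff_map_of_injective hinj]
      simp
    rw [hlcmap, Complex.norm_intCast]
    have hne : A.leadingCoeff ≠ 0 := Polynomial.leadingCoeff_ne_zero.mpr hAne
    have h1 : 1 ≤ |A.leadingCoeff| := Int.one_le_abs (by exact hne)
    exact_mod_cast h1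
  have hroots1 : ∀ x ∈ Ac.roots.map (fun z : ℂ => ‖z‖), 1 < x := by
    intro x hx
    obtain ⟨r, hr, rfl⟩ := Multiset.mem_map.mp hx
    apply hAexp
    have hr' := Polynomial.isRoot_of_mem_roots hr
    rw [Polynomial.aeval_def, ← Polynomial.eval_map]
    exact hr'
  have hcard : Ac.roots ≠ 0 := by
    have hc := Polynomial.splits_iff_card_roots.mp hsplit
    have hnd : Ac.natDegree = A.natDegree := Polynomial.natDegree_map_eq_of_injective hinj A
    intro h0
    rw [h0] at hc
    simp only [Multiset.card_zero] at hc
    omega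
  have hprod : 1 < (Ac.roots.map (fun z : ℂ => ‖z‖)).prod :=
    one_lt_mult_prod hroots1 (fun h => hcard (Multiset.map_eq_zero.mp h))
  have hfin : 1 < |(A.coeff 0 : ℝ)| := by
    rw [habs]
    nlinarith
  have hfin2 : (1 : ℝ) < ((A.coeff 0).natAbs : ℝ) := by
    rwa [Nat.cast_natAbs, Int.cast_abs]
  exact_mod_cast hfin2

lemma one_not_alpha_mul (hAroot : Polynomial.aeval α A = 0) (hAirr : Irreducible A)
    (hAexp : ∀ z : ℂ, Polynomial.aeval z A = 0 → 1 < ‖z‖) :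
    ∀ y ∈ Zring K α, α * y ≠ 1 := by
  intro y hy hone
  obtain ⟨g, rfl⟩ := mem_zring_iff.mp hy
  set B : Polynomial ℤ := Polynomial.X * g - 1 with hBdef
  have hBroot : Polynomial.aeval α B = 0 := by
    rw [hBdef]
    simp only [map_sub, map_mul, map_one, Polynomial.aeval_X]
    rw [hone]
    ring
  have hB0 : B.coeff 0 = -1 := by
    rw [hBdef]
    simp [Polynomial.mul_coeff_zero]
  have hBprim : B.IsPrimitive := by
    intro r hr
    have hdvd : r ∣ B.coeff 0 := (Polynomial.C_dvd_iff_dvd_coeff _ _).mp hr 0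
    rw [hB0] at hdvd
    exact isUnit_of_dvd_unit hdvd (IsUnit.neg isUnit_one)
  have hAprim := A_isPrimitive hAroot hAirr
  have hint : IsIntegral ℚ α := IsIntegral.of_finite ℚ α
  have hμA : minpoly ℚ α ∣ A.map (algebraMap ℤ ℚ) :=
    minpoly.dvd ℚ α (by rw [Polynomial.aeval_map_algebraMap]; exact hAroot)
  have hμB : minpoly ℚ α ∣ B.map (algebraMap ℤ ℚ) :=
    minpoly.dvd ℚ α (by rw [Polynomial.aeval_map_algebraMap]; exact hBroot)
  have hAq_irr : Irreducible (A.map (algebraMap ℤ ℚ)) := by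
    have h := (Polynomial.IsPrimitive.Int.irreducible_iff_irreducible_map_cast hAprim).mp hAirr
    rwa [← algebraMap_int_eq] at h
  have hAdvdμ : A.map (algebraMap ℤ ℚ) ∣ minpoly ℚ α := by
    obtain ⟨c, hc⟩ := hμA
    rcases hAq_irr.isUnit_or_isUnit hc with h | h
    · exfalso
      have h1 := minpoly.natDegree_pos hint
      have h2 := Polynomial.natDegree_eq_zero_of_isUnit h
      omega
    · obtain ⟨u, hu⟩ := h
      exact ⟨(↑u⁻¹ : Polynomial ℚ), by rw [hc, ← hu, mul_assoc, ← Units.val_mul, mul_inv_cancel,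
        Units.val_one, mul_one]⟩
  have hABq : A.map (algebraMap ℤ ℚ) ∣ B.map (algebraMap ℤ ℚ) := dvd_trans hAdvdμ hμB
  have hAB : A ∣ B :=
    Polynomial.IsPrimitive.dvd_of_fraction_map_dvd_fraction_map hAprim hABq
  obtain ⟨cpoly, hcp⟩ := hAB
  have h0 : B.coeff 0 = A.coeff 0 * cpoly.coeff 0 := by rw [hcp, Polynomial.mul_coeff_zero]
  have hdvd : A.coeff 0 ∣ (-1 : ℤ) := ⟨cpoly.coeff 0, by rw [← hB0, h0]⟩
  have hu : IsUnit (A.coeff 0) := isUnit_of_dvd_unit hdvd (IsUnit.neg isUnit_one)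
  have hlt := coeff_zero_natAbs_lt hAroot hAirr hAexp
  rw [Int.isUnit_iff_natAbs_eq] at hu
  omega

end Aux2

/-- `ℤ[α]` is an additive subgroup of finite index of `𝒪[α]`,
and `𝔷 = ℤ⟨α,𝒟⟩` is an additive subgroup of finite index of `ℤ[α]`. -/
theorem zring_finite_index
    (α : K) (A : Polynomial ℤ)
    (hgen : Algebra.adjoin ℚ {α} = ⊤)
    (hAroot : Polynomial.aeval α A = 0)
    (hAirr : Irreducible A)
    (hAexp : ∀ z : ℂ, Polynomial.aeval z A = 0 → 1 < ‖z‖)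
    (D : Finset K) (hD : IsStandardDigitSet K α D) :
    ((Zring K α).toSubring.toAddSubgroup ≤
        (Algebra.adjoin (𝓞 K) {α}).toSubring.toAddSubgroup ∧
      (Zring K α).toSubring.toAddSubgroup.relIndex
        (Algebra.adjoin (𝓞 K) {α}).toSubring.toAddSubgroup ≠ 0) ∧
    ((zmoduleAD K α D).toAddSubgroup ≤ (Zring K α).toSubring.toAddSubgroup ∧
      (zmoduleAD K α D).toAddSubgroup.relIndex
        (Zring K α).toSubring.toAddSubgroup ≠ 0) := by
  have hle1 : (Zring K α).toSubring.toAddSubgroup ≤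
      (Algebra.adjoin (𝓞 K) {α}).toSubring.toAddSubgroup := by
    intro x hx
    simp only [Subring.mem_toAddSubgroup, Subalgebra.mem_toSubring] at hx ⊢
    induction hx using Algebra.adjoin_induction with
    | mem z hz => exact Algebra.subset_adjoin hz
    | algebraMap n =>
      have h1 := Subalgebra.algebraMap_mem (Algebra.adjoin (𝓞 K) {α}) ((n : ℤ) : 𝓞 K)
      rw [map_intCast] at h1
      simpa using h1
    | add u v hu hv ihu ihv => exact add_mem ihu ihv
    | mul u v hu hv ihu ihv => exact mul_mem ihu ihv
  have hle2 : (zmoduleAD K α D).toAddSubgroup ≤ (Zring K α).toSubring.toAddSubgroup := by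
    intro x hx
    rw [Submodule.mem_toAddSubgroup] at hx
    simp only [Subring.mem_toAddSubgroup, Subalgebra.mem_toSubring]
    exact zmod_le_zring D hD x hx
  refine ⟨⟨hle1, ?_⟩, hle2, ?_⟩
  · obtain ⟨F, hF⟩ := cov_O hgen hAroot hAirr
    apply relindex_ne_zero_of_cov hle1 F
    intro x hx
    rw [Subring.mem_toAddSubgroup, Subalgebra.mem_toSubring] at hx
    obtain ⟨f, hf, hxf⟩ := hF x hx
    refine ⟨f, hf, ?_⟩
    rw [Subring.mem_toAddSubgroup, Subalgebra.mem_toSubring]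
    exact hxf
  · obtain ⟨d₀, ⟨hd₀D, y₀, hy₀, h₀⟩, _⟩ := hD.2 0 (zero_mem _)
    obtain ⟨d₁, ⟨hd₁D, y₁, hy₁, h₁⟩, _⟩ := hD.2 1 (one_mem _)
    set x0 : K := d₀ - d₁ with hx0
    have hx0mem : x0 ∈ zmoduleAD K α D :=
      Submodule.mem_sInf.mpr fun M hM => hM.1 d₀ hd₀D d₁ hd₁D
    have hx0ne : x0 ≠ 0 := by
      intro h
      have hd : d₀ = d₁ := by rwa [hx0, sub_eq_zero] at h
      have hone : (1 : K) = α * (y₁ - y₀) := by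
        rw [mul_sub, ← h₁, ← h₀, hd]
        ring
      exact one_not_alpha_mul hAroot hAirr hAexp (y₁ - y₀) (sub_mem hy₁ hy₀) hone.symm
    obtain ⟨m, hm0, hmmem⟩ := exists_int_mul_mem hgen x0⁻¹
    obtain ⟨F, hF⟩ := cov_all hAroot hAirr m hm0
    apply relindex_ne_zero_of_cov hle2 F
    intro x hx
    rw [Subring.mem_toAddSubgroup, Subalgebra.mem_toSubring] at hx
    obtain ⟨f, hf, y, hy, hxy⟩ := hF x hx
    refine ⟨f, hf, ?_⟩
    rw [Submodule.mem_toAddSubgroup]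
    have hmx : (m : K) * y = (((m : K) * x0⁻¹) * y) * x0 := by
      field_simp
    rw [hxy, hmx]
    exact zmod_mul_mem D (mul_mem hmmem hy) x0 hx0mem
end
end

section
/- For each x ∈ ℤ[α], the intersective tile satisfies the set equation 𝒢(x) = ⋃_{y ∈ T_α^{−1}(x)} α^{−1}·𝒢(y), where the union is over all y ∈ ℤ[α] with T_α(y) = x and α^{−1}· denotes coordinatewise multiplication by α^{−1}. -/
/-!
Setup (following Steiner–Thuswaldner, "Rational self-affine tiles"):
`K` is a number field generated over `ℚ` by an expanding algebraic number `α`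
whose primitive minimal polynomial is `A ∈ ℤ[X]` (encoded by: `A` irreducible in
`ℤ[X]`, `A(α) = 0`, and every complex root of `A` has absolute value `> 1`).
The representation space is `𝕂_α = 𝕂_∞ × ∏_{𝔭 ∣ 𝔟} K_𝔭`, where `𝕂_∞` is the
mixed space `ℝ^r × ℂ^s` of `K` and the product runs over the finite places with
`|α|_𝔭 > 1` (the primes dividing the denominator ideal `𝔟` of `α`).
-/

open NumberField MeasureTheory Polynomial IsDedekindDomain Filter Topology Set
open scoped Classical

noncomputable section

variable (K : Type) [Field K] [NumberField K]

/-- The intersective tile `𝒢(x)`, regarded as a subset of `𝕂_α`. -/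
def GtileA (α : K) (D : Finset K) (x : K) : Set (KA K α) :=
  {z | z - PhiA K α x ∈ Ztile K α D ∧ z.2 = 0}

lemma phiA_mul (α a b : K) : PhiA K α (a * b) = PhiA K α a * PhiA K α b := by
  unfold PhiA
  rw [Prod.mk_mul_mk]
  refine Prod.ext (map_mul _ _ _) ?_
  funext v
  exact map_mul (algebraMap K _) a b

lemma phiA_add (α a b : K) : PhiA K α (a + b) = PhiA K α a + PhiA K α b := by
  unfold PhiA
  rw [Prod.mk_add_mk]
  refine Prod.ext (map_add _ _ _) ?_
  funext v
  exact (algebraMap K _).map_add a b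

lemma phiA_one (α : K) : PhiA K α 1 = 1 := by
  unfold PhiA
  refine Prod.ext (map_one _) ?_
  funext v
  simp

/-- Set equation for intersective tiles:
`𝒢(x) = ⋃_{y ∈ T_α^{-1}(x)} α^{-1}·𝒢(y)`; here `T_α^{-1}(x)`, the preimage of
`x ∈ ℤ[α]` under `T_α : ℤ[α] → ℤ[α], y ↦ α^{-1}(y - d)` (with `d ∈ 𝒟` the unique
digit making the image lie in `ℤ[α]`), equals `{y ∈ ℤ[α] | ∃ d ∈ 𝒟, y = αx + d}`. -/
theorem intersective_tile_set_equation
    (α : K) (A : Polynomial ℤ)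
    (hgen : Algebra.adjoin ℚ {α} = ⊤)
    (hAroot : Polynomial.aeval α A = 0)
    (hAirr : Irreducible A)
    (hAexp : ∀ z : ℂ, Polynomial.aeval z A = 0 → 1 < ‖z‖)
    (D : Finset K) (hD : IsStandardDigitSet K α D) :
    ∀ x ∈ Zring K α,
      GtileA K α D x =
        ⋃ y ∈ {y : K | y ∈ Zring K α ∧ ∃ d ∈ D, y = α * x + d},
          (fun z => PhiA K α α⁻¹ * z) '' GtileA K α D y := by
  -- α ≠ 0
  have hα : α ≠ 0 := by
    intro h
    have h0 : algebraMap ℤ K (A.coeff 0) = 0 := by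
      have := hAroot
      rw [h, Polynomial.aeval_def, Polynomial.eval₂_at_zero] at this
      exact this
    have hc0 : A.coeff 0 = 0 := by
      exact_mod_cast (map_eq_zero_iff _ (algebraMap ℤ K).injective_int).mp h0
    have : Polynomial.aeval (0 : ℂ) A = 0 := by
      rw [Polynomial.aeval_def, Polynomial.eval₂_at_zero, hc0, map_zero]
    have := hAexp 0 this
    rw [norm_zero] at this
    exact absurd this (by norm_num)
  have h1 : PhiA K α α⁻¹ * PhiA K α α = 1 := by
    rw [← phiA_mul, inv_mul_cancel₀ hα, phiA_one]
  intro x hx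
  ext z
  simp only [Set.mem_iUnion, Set.mem_image, Set.mem_setOf_eq, GtileA, Ztile]
  constructor
  · rintro ⟨⟨d, hd, hlim⟩, hz2⟩
    refine ⟨α * x + d 0, ⟨?_, d 0, hd 0, rfl⟩, PhiA K α α * z,
      ⟨⟨fun k => d (k + 1), fun k => hd (k + 1), ?_⟩, ?_⟩, ?_⟩
    · exact add_mem (mul_mem (Algebra.self_mem_adjoin_singleton ℤ α) hx)
        (hD.1 (Finset.mem_coe.mpr (hd 0)))
    · have key : ∀ N, (∑ k ∈ Finset.range N, PhiA K α (d (k + 1) * α⁻¹ ^ (k + 1))) =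
          PhiA K α α * (∑ k ∈ Finset.range (N + 1), PhiA K α (d k * α⁻¹ ^ (k + 1)))
            - PhiA K α (d 0) := by
        intro N
        rw [Finset.mul_sum, Finset.sum_range_succ']
        have hterm : ∀ k, PhiA K α α * PhiA K α (d k * α⁻¹ ^ (k + 1)) =
            PhiA K α (d k * α⁻¹ ^ k) := by
          intro k
          rw [← phiA_mul]
          congr 1
          rw [pow_succ]
          field_simp
        simp only [hterm, pow_zero, mul_one]
        exact (add_sub_cancel_right _ _).symm
      have hS : Tendsto (fun N => ∑ k ∈ Finset.range (N + 1),
          PhiA K α (d k * α⁻¹ ^ (k + 1))) atTop (𝓝 (z - PhiA K α x)) :=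
        hlim.comp (tendsto_add_atTop_nat 1)
      have hlim2 := (hS.const_mul (PhiA K α α)).sub_const (PhiA K α (d 0))
      have hval : PhiA K α α * z - PhiA K α (α * x + d 0) =
          PhiA K α α * (z - PhiA K α x) - PhiA K α (d 0) := by
        rw [phiA_add, phiA_mul]; ring
      rw [hval]
      simpa only [key] using hlim2
    · rw [Prod.snd_mul, hz2, mul_zero]
    · rw [← mul_assoc, h1, one_mul]
  · rintro ⟨y, ⟨hy, d, hdD, rfl⟩, w, ⟨⟨e, he, hlim⟩, hw2⟩, rfl⟩
    constructor
    · refine ⟨fun k => Nat.casesOn k d e, fun k => by cases k with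
        | zero => exact hdD
        | succ n => exact he n, ?_⟩
      rw [← tendsto_add_atTop_iff_nat 1]
      have key : ∀ N, (∑ k ∈ Finset.range (N + 1),
          PhiA K α ((Nat.casesOn k d e : K) * α⁻¹ ^ (k + 1))) =
          PhiA K α α⁻¹ * (∑ k ∈ Finset.range N, PhiA K α (e k * α⁻¹ ^ (k + 1)))
            + PhiA K α (d * α⁻¹) := by
        intro N
        rw [Finset.sum_range_succ', Finset.mul_sum]
        congr 1
        · refine Finset.sum_congr rfl fun k _ => ?_
          rw [← phiA_mul]
          congr 1
          rw [pow_succ, pow_succ]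
          ring
        · norm_num
      have hlim2 := (hlim.const_mul (PhiA K α α⁻¹)).add_const (PhiA K α (d * α⁻¹))
      have hval : PhiA K α α⁻¹ * w - PhiA K α x =
          PhiA K α α⁻¹ * (w - PhiA K α (α * x + d)) + PhiA K α (d * α⁻¹) := by
        rw [phiA_add, phiA_mul, phiA_mul]
        linear_combination (PhiA K α x) * h1
      rw [hval]
      simpa only [key] using hlim2
    · rw [Prod.snd_mul, hw2, mul_zero]
end
end

section
/- The ℤ-module Λ_{α,0} = ℤ[α] ∩ α^{−1}ℤ[α⁻¹] is generated over ℤ by the elements w_0, w_1, …, w_{n−1}, where w_0 = a_n and w_i = α w_{i−1} + a_{n−i} for 1 ≤ i ≤ n−1. -/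
/-!
Setup (following Steiner–Thuswaldner, "Rational self-affine tiles"):
`K` is a number field generated over `ℚ` by an expanding algebraic number `α`
whose primitive minimal polynomial is `A ∈ ℤ[X]` (encoded by: `A` irreducible in
`ℤ[X]`, `A(α) = 0`, and every complex root of `A` has absolute value `> 1`).
The representation space is `𝕂_α = 𝕂_∞ × ∏_{𝔭 ∣ 𝔟} K_𝔭`, where `𝕂_∞` is the
mixed space `ℝ^r × ℂ^s` of `K` and the product runs over the finite places with
`|α|_𝔭 > 1` (the primes dividing the denominator ideal `𝔟` of `α`).
-/

open NumberField MeasureTheory Polynomial IsDedekindDomain Filter Topology Set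
open scoped Classical

noncomputable section

variable (K : Type) [Field K] [NumberField K]

section AuxDivX

open Polynomial

private lemma coeff_divX_iterate (p : Polynomial ℤ) (k j : ℕ) :
    (Polynomial.divX^[k] p).coeff j = p.coeff (j + k) := by
  induction k generalizing p j with
  | zero => simp
  | succ k ih =>
    rw [Function.iterate_succ_apply, ih, Polynomial.coeff_divX, Nat.add_assoc]

private lemma divX_iterate_eq_zero {p : Polynomial ℤ} {k : ℕ}
    (h : p.natDegree < k) : Polynomial.divX^[k] p = 0 := by
  ext j
  rw [coeff_divX_iterate, Polynomial.coeff_zero]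
  exact Polynomial.coeff_eq_zero_of_natDegree_lt (by omega)

private lemma divX_iterate_add (p q : Polynomial ℤ) (k : ℕ) :
    Polynomial.divX^[k] (p + q) = Polynomial.divX^[k] p + Polynomial.divX^[k] q := by
  ext j
  simp [coeff_divX_iterate]

private lemma divX_iterate_C_mul (c : ℤ) (p : Polynomial ℤ) (k : ℕ) :
    Polynomial.divX^[k] (Polynomial.C c * p) = Polynomial.C c * Polynomial.divX^[k] p := by
  ext j
  simp [coeff_divX_iterate]

private lemma divX_iterate_X_pow_mul (p : Polynomial ℤ) (d : ℕ) :
    Polynomial.divX^[d] ((X : Polynomial ℤ) ^ d * p) = p := by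
  ext j
  rw [coeff_divX_iterate, Polynomial.coeff_X_pow_mul]

private lemma divX_iterate_mul_X_pow_le (p : Polynomial ℤ) {m d : ℕ} (h : m ≤ d) :
    Polynomial.divX^[d] (p * (X : Polynomial ℤ) ^ m) = Polynomial.divX^[d - m] p := by
  ext j
  rw [coeff_divX_iterate, coeff_divX_iterate, Polynomial.coeff_mul_X_pow', if_pos (by omega)]
  congr 1
  omega

private lemma divX_iterate_mul_X_pow_gt (p : Polynomial ℤ) {m d : ℕ} (h : d < m) :
    Polynomial.divX^[d] (p * (X : Polynomial ℤ) ^ m) = p * (X : Polynomial ℤ) ^ (m - d) := by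
  ext j
  rw [coeff_divX_iterate, Polynomial.coeff_mul_X_pow', Polynomial.coeff_mul_X_pow']
  split_ifs with h1 h2 h2
  · congr 1; omega
  · omega
  · omega
  · rfl

private lemma X_pow_mul_divX_iterate_add (p : Polynomial ℤ) (t : ℕ) :
    (X : Polynomial ℤ) ^ t * Polynomial.divX^[t] p
      + ∑ j ∈ Finset.range t, Polynomial.C (p.coeff j) * X ^ j = p := by
  induction t with
  | zero => simp
  | succ t ih =>
    rw [Finset.sum_range_succ, Function.iterate_succ_apply']
    have h1 := Polynomial.X_mul_divX_add (Polynomial.divX^[t] p)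
    have h2 : (Polynomial.divX^[t] p).coeff 0 = p.coeff t := by
      rw [coeff_divX_iterate, Nat.zero_add]
    rw [h2] at h1
    linear_combination ih + ((X : Polynomial ℤ) ^ t) * h1

end AuxDivX
/-- `Λ_{α,0} = ℤ[α] ∩ α^{-1}ℤ[α⁻¹]` is generated over `ℤ` by
`w_0 = a_n` and `w_i = α w_{i-1} + a_{n-i}` (`1 ≤ i ≤ n-1`). -/
theorem lambda_zero_generators
    (α : K) (A : Polynomial ℤ)
    (hgen : Algebra.adjoin ℚ {α} = ⊤)
    (hAroot : Polynomial.aeval α A = 0)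
    (hAirr : Irreducible A)
    (hAexp : ∀ z : ℂ, Polynomial.aeval z A = 0 → 1 < ‖z‖) :
    ∀ w : ℕ → K, w 0 = (A.coeff A.natDegree : ℤ) →
      (∀ i : ℕ, i + 1 < A.natDegree →
        w (i + 1) = α * w i + (A.coeff (A.natDegree - (i + 1)) : ℤ)) →
      LambdaSet K α 0 = ↑(Submodule.span ℤ (w '' Set.Iio A.natDegree)) := by
  intro w hw0 hwrec
  set n := A.natDegree with hn
  -- basic facts
  have hA0 : A ≠ 0 := hAirr.ne_zero
  have hn1 : 1 ≤ n := by
    by_contra h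
    push_neg at h
    interval_cases n
    · obtain ⟨a, ha⟩ := Polynomial.natDegree_eq_zero.mp hn.symm
      rw [← ha, Polynomial.aeval_C, eq_intCast,
        Int.cast_eq_zero] at hAroot
      exact hA0 (by rw [← ha, hAroot, map_zero])
  have hα : α ≠ 0 := by
    intro h0
    subst h0
    have h1 : (algebraMap ℤ K) (A.coeff 0) = 0 := by
      rw [← Polynomial.eval₂_at_zero (algebraMap ℤ K), ← Polynomial.aeval_def]
      exact hAroot
    have h2 : A.coeff 0 = 0 := by
      rwa [algebraMap_int_eq, eq_intCast, Int.cast_eq_zero] at h1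
    have h3 := hAexp 0 (by
      rw [Polynomial.aeval_def, Polynomial.eval₂_at_zero, h2]
      simp)
    norm_num at h3
  -- the auxiliary elements u t = aeval α (divX^[t] A)
  set u : ℕ → K := fun t => Polynomial.aeval α (Polynomial.divX^[t] A) with hu
  -- evaluated fundamental identity
  have huK : ∀ t : ℕ, α ^ t * u t
      + ∑ j ∈ Finset.range t, (A.coeff j : K) * α ^ j = 0 := by
    intro t
    have h2 := congrArg (Polynomial.aeval α) (X_pow_mul_divX_iterate_add A t)
    rw [map_add, map_mul, map_pow, Polynomial.aeval_X, map_sum] at h2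
    simp only [map_mul, Polynomial.aeval_C, map_pow, Polynomial.aeval_X,
      algebraMap_int_eq, eq_intCast, map_intCast] at h2
    rw [hAroot] at h2
    exact h2
  have hu_mem_Zring : ∀ t : ℕ, u t ∈ Zring K α := by
    intro t
    have : Zring K α = (Polynomial.aeval α).range := Algebra.adjoin_singleton_eq_range_aeval ℤ α
    rw [this]
    exact ⟨_, rfl⟩
  have hαu_mem : ∀ t : ℕ, 1 ≤ t → α * u t ∈ Zinv K α := by
    intro t ht
    have hinv : α⁻¹ ∈ Zinv K α := Algebra.self_mem_adjoin_singleton ℤ α⁻¹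
    have key : α ^ t * u t = -∑ j ∈ Finset.range t, (A.coeff j : K) * α ^ j :=
      eq_neg_of_add_eq_zero_left (huK t)
    have heq : α * u t = ∑ j ∈ Finset.range t, (-(A.coeff j) : ℤ) • (α⁻¹) ^ (t - 1 - j) := by
      apply mul_left_cancel₀ (pow_ne_zero (t - 1) hα)
      have ht' : t - 1 + 1 = t := by omega
      rw [← mul_assoc, ← pow_succ, ht', key, Finset.mul_sum, ← Finset.sum_neg_distrib]
      apply Finset.sum_congr rfl
      intro j hj
      have hj' : j < t := Finset.mem_range.mp hj
      rw [zsmul_eq_mul]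
      push_cast
      have hsplit : α ^ (t - 1) = α ^ j * α ^ (t - 1 - j) := by
        rw [← pow_add]
        congr 1
        omega
      rw [hsplit]
      have hcan : α ^ (t - 1 - j) * (α⁻¹) ^ (t - 1 - j) = 1 := by
        rw [← mul_pow, mul_inv_cancel₀ hα, one_pow]
      linear_combination ((A.coeff j : K) * α ^ j) * hcan
    rw [heq]
    exact Subalgebra.sum_mem _ fun j _ =>
      Subalgebra.smul_mem _ (Subalgebra.pow_mem _ hinv _) _
  -- closed form for w
  have hstep : ∀ k : ℕ, u k = α * u (k + 1) + (A.coeff k : K) := by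
    intro k
    have h1 := Polynomial.X_mul_divX_add (Polynomial.divX^[k] A)
    have h2 : (Polynomial.divX^[k] A).coeff 0 = A.coeff k := by
      rw [coeff_divX_iterate, Nat.zero_add]
    rw [h2] at h1
    have h3 := congrArg (Polynomial.aeval α) h1
    rw [map_add, map_mul, Polynomial.aeval_X, Polynomial.aeval_C,
      eq_intCast] at h3
    rw [hu]
    simp only
    rw [← h3, Function.iterate_succ_apply']
  have hw_eq : ∀ i : ℕ, i < n → w i = u (n - i) := by
    intro i
    induction i with
    | zero =>
      intro _
      have hdiv : Polynomial.divX^[n] A = Polynomial.C (A.coeff n) := by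
        ext j
        rw [coeff_divX_iterate, Polynomial.coeff_C]
        split_ifs with h
        · rw [h, Nat.zero_add]
        · exact Polynomial.coeff_eq_zero_of_natDegree_lt (by omega)
      rw [hw0, Nat.sub_zero, hu]
      simp only
      rw [hdiv, Polynomial.aeval_C, eq_intCast]
    | succ i ih =>
      intro hi
      have hii : i < n := by omega
      rw [hwrec i hi, ih hii]
      have hk : n - (i + 1) + 1 = n - i := by omega
      have := hstep (n - (i + 1))
      rw [hk] at this
      rw [this]
  -- the span
  set S : Submodule ℤ K := Submodule.span ℤ (w '' Set.Iio n) with hS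
  have genS : ∀ t : ℕ, u t ∈ S := by
    intro t
    rcases Nat.eq_zero_or_pos t with ht0 | ht1
    · have : u t = 0 := by
        rw [ht0, hu]
        simp only [Function.iterate_zero, id_eq]
        exact hAroot
      rw [this]; exact zero_mem _
    rcases le_or_gt t n with htn | htn
    · have h1 : w (n - t) = u t := by
        rw [hw_eq (n - t) (by omega)]
        congr 1
        omega
      rw [← h1]
      exact Submodule.subset_span ⟨n - t, by simp [Set.mem_Iio]; omega, rfl⟩
    · have : u t = 0 := by
        rw [hu]
        simp only
        rw [divX_iterate_eq_zero (by omega), map_zero]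
      rw [this]; exact zero_mem _
  -- main claim: images of divX^[d] (A * q) lie in S
  have claim : ∀ (q : Polynomial ℤ) (d : ℕ),
      Polynomial.aeval α (Polynomial.divX^[d] (A * q)) ∈ S := by
    intro q
    induction q using Polynomial.induction_on' with
    | add p r hp hr =>
      intro d
      rw [mul_add, divX_iterate_add, map_add]
      exact add_mem (hp d) (hr d)
    | monomial m c =>
      intro d
      have h1 : A * Polynomial.monomial m c = Polynomial.C c * (A * Polynomial.X ^ m) := by
        rw [← Polynomial.C_mul_X_pow_eq_monomial]; ring
      rw [h1, divX_iterate_C_mul, map_mul, Polynomial.aeval_C,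
        eq_intCast, ← zsmul_eq_mul]
      apply Submodule.smul_mem
      by_cases hm : m ≤ d
      · rw [divX_iterate_mul_X_pow_le A hm]
        exact genS (d - m)
      · rw [divX_iterate_mul_X_pow_gt A (by omega), map_mul, hAroot, zero_mul]
        exact zero_mem _
  -- primitivity of A
  have hprim : A.IsPrimitive := by
    rw [Polynomial.isPrimitive_iff_isUnit_of_C_dvd]
    intro r hr
    obtain ⟨q, hq⟩ := hr
    rcases hAirr.isUnit_or_isUnit hq with h | h
    · exact Polynomial.isUnit_C.mp h
    · exfalso
      obtain ⟨s, hs_unit, hs⟩ := Polynomial.isUnit_iff.mp h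
      have : n = 0 := by
        rw [hn, hq, ← hs, ← Polynomial.C_mul, Polynomial.natDegree_C]
      omega
  -- Gauss-type divisibility: A divides every integer polynomial vanishing at α
  have hint : IsIntegral ℚ α := IsIntegral.of_finite ℚ α
  have hAQirr : Irreducible (A.map (algebraMap ℤ ℚ)) :=
    (hprim.irreducible_iff_irreducible_map_fraction_map (K := ℚ)).mp hAirr
  have hassoc : Associated (minpoly ℚ α) (A.map (algebraMap ℤ ℚ)) :=
    (minpoly.irreducible hint).associated_of_dvd hAQirr
      (minpoly.dvd ℚ α (by rw [Polynomial.aeval_map_algebraMap]; exact hAroot))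
  have hAdvd : ∀ P : Polynomial ℤ, Polynomial.aeval α P = 0 → A ∣ P := by
    intro P hP
    by_cases hP0 : P = 0
    · simp [hP0]
    have h1 : A.map (algebraMap ℤ ℚ) ∣ P.map (algebraMap ℤ ℚ) := by
      refine hassoc.symm.dvd.trans (minpoly.dvd ℚ α ?_)
      rw [Polynomial.aeval_map_algebraMap]; exact hP
    have hc : P.content ≠ 0 := fun h => hP0 (Polynomial.content_eq_zero_iff.mp h)
    have h2 : P.map (algebraMap ℤ ℚ) =
        Polynomial.C ((algebraMap ℤ ℚ) P.content) * (P.primPart.map (algebraMap ℤ ℚ)) := by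
      conv_lhs => rw [P.eq_C_content_mul_primPart]
      rw [Polynomial.map_mul, Polynomial.map_C]
    have hunit : IsUnit (Polynomial.C ((algebraMap ℤ ℚ) P.content)) := by
      rw [Polynomial.isUnit_C]
      exact isUnit_iff_ne_zero.mpr (by simpa using hc)
    have h3 : A.map (algebraMap ℤ ℚ) ∣ P.primPart.map (algebraMap ℤ ℚ) := by
      rw [h2] at h1
      exact (hunit.dvd_mul_left).mp h1
    exact (hprim.dvd_of_fraction_map_dvd_fraction_map
      h3).trans P.primPart_dvd
  have hzpow : α ^ ((0:ℤ) - 1) = α⁻¹ := by norm_num [zpow_neg, zpow_one]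
  -- the set equality
  ext x
  simp only [LambdaSet, Set.mem_setOf_eq, SetLike.mem_coe]
  constructor
  · rintro ⟨hx1, y, hyZ, hxy⟩
    rw [hzpow] at hxy
    have hx1' : x ∈ (Polynomial.aeval (R := ℤ) α).range := by
      rw [← Algebra.adjoin_singleton_eq_range_aeval ℤ α]; exact hx1
    obtain ⟨B, hB⟩ := hx1'
    have hB : Polynomial.aeval α B = x := hB
    have hyZ' : y ∈ (Polynomial.aeval (R := ℤ) α⁻¹).range := by
      rw [← Algebra.adjoin_singleton_eq_range_aeval ℤ α⁻¹]; exact hyZ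
    obtain ⟨D, hD⟩ := hyZ'
    have hD : Polynomial.aeval α⁻¹ D = y := hD
    set e := D.natDegree with he
    set d := e + 1 with hd
    set C' : Polynomial ℤ := ∑ k ∈ Finset.range (e+1), Polynomial.monomial (e - k) (D.coeff k)
      with hC'
    have hy_sum : y = ∑ k ∈ Finset.range (e+1), D.coeff k • (α⁻¹) ^ k := by
      rw [← hD, he]
      exact Polynomial.aeval_eq_sum_range _
    have hkey : α ^ d * x = Polynomial.aeval α C' := by
      have h1 : α ^ d * x = α ^ e * y := by
        rw [hxy, hd, pow_succ, mul_assoc, mul_inv_cancel_left₀ hα]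
      rw [h1, hy_sum, Finset.mul_sum, hC', map_sum]
      apply Finset.sum_congr rfl
      intro k hk
      have hk' : k ≤ e := by have := Finset.mem_range.mp hk; omega
      rw [Polynomial.aeval_monomial, algebraMap_int_eq, eq_intCast, zsmul_eq_mul]
      have hsplit : α ^ e = α ^ (e - k) * α ^ k := by rw [← pow_add]; congr 1; omega
      rw [hsplit]
      have hcan : α ^ k * (α⁻¹) ^ k = 1 := by rw [← mul_pow, mul_inv_cancel₀ hα, one_pow]
      linear_combination ((D.coeff k : K) * α ^ (e - k)) * hcan
    have hC'deg : C'.natDegree < d := by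
      rw [hd, Nat.lt_succ_iff, hC']
      apply Polynomial.natDegree_sum_le_of_forall_le
      intro k _
      exact le_trans (Polynomial.natDegree_monomial_le _) (Nat.sub_le e k)
    have hPzero : Polynomial.aeval α ((Polynomial.X : Polynomial ℤ) ^ d * B - C') = 0 := by
      rw [map_sub, map_mul, map_pow, Polynomial.aeval_X, hB, ← hkey, sub_self]
    obtain ⟨Q, hQ⟩ := hAdvd _ hPzero
    have hXdB : (Polynomial.X : Polynomial ℤ) ^ d * B = A * Q + C' := by
      linear_combination hQ
    have hB' : B = Polynomial.divX^[d] (A * Q) := by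
      have h5 := congrArg (fun p => Polynomial.divX^[d] p) hXdB
      rw [divX_iterate_X_pow_mul, divX_iterate_add,
        divX_iterate_eq_zero hC'deg, add_zero] at h5
      exact h5
    rw [← hB, hB']
    exact claim Q d
  · intro hx
    refine Submodule.span_induction ?_ ?_ ?_ ?_ hx
    · rintro z ⟨i, hi, rfl⟩
      have hi' : i < n := hi
      have ht1 : 1 ≤ n - i := by omega
      rw [hw_eq i hi']
      refine ⟨hu_mem_Zring (n - i), α * u (n - i), hαu_mem (n - i) ht1, ?_⟩
      rw [hzpow, inv_mul_cancel_left₀ hα]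
    · exact ⟨zero_mem _, 0, zero_mem _, by rw [mul_zero]⟩
    · rintro a b _ _ ⟨haZ, ya, hyaZ, hae⟩ ⟨hbZ, yb, hybZ, hbe⟩
      exact ⟨add_mem haZ hbZ, ya + yb, add_mem hyaZ hybZ, by rw [mul_add, ← hae, ← hbe]⟩
    · rintro c z _ ⟨hzZ, yz, hyzZ, hze⟩
      refine ⟨(Zring K α).smul_mem hzZ c, c • yz, (Zinv K α).smul_mem hyzZ c, ?_⟩
      rw [hze, mul_smul_comm]
end
end
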